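/- NDME block embedding of a linear ODE into a Lindblad equation: Let A₁, A₂ : ℝ → M_n(ℂ) be continuous with A₁(t) Hermitian positive semidefinite and A₂(t) Hermitian for every t, and let A₁(t)^{1/2} denote the positive semidefinite square root of A₁(t). Define the (n+1)×(n+1) block matrices H(t) = fromBlocks A₂(t) 0 0 0 and F(t) = fromBlocks √2·A₁(t)^{1/2} 0 0 0. Suppose ρ : ℝ → M_{n+1}(ℂ) is differentiable and satisfies ρ'(t) = −i(H(t)ρ(t) − ρ(t)H(t)) + F(t) ρ(t) F(t)ᴴ − ½(ρ(t) F(t)ᴴ F(t) + F(t)ᴴ F(t) ρ(t)). Then the upper-right n×1 block u(t) of ρ(t) satisfies u'(t) = −(A₁(t) + i A₂(t)) u(t). -/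

import Mathlib

open Matrix
open scoped ComplexOrder

noncomputable def Matrix.PosSemidef.sqrt {n : Type*} [Fintype n] [DecidableEq n]
    {A : Matrix n n ℂ} (hA : A.PosSemidef) : Matrix n n ℂ :=
  hA.1.eigenvectorUnitary.1 * diagonal ((↑) ∘ Real.sqrt ∘ hA.1.eigenvalues) *
    (star hA.1.eigenvectorUnitary : Matrix n n ℂ)

theorem Matrix.PosSemidef.sqrt_conjTranspose_self' {n : Type*} [Fintype n] [DecidableEq n]
    {A : Matrix n n ℂ} (hA : A.PosSemidef) : (hA.sqrt)ᴴ = hA.sqrt := by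
  unfold Matrix.PosSemidef.sqrt
  rw [conjTranspose_mul, conjTranspose_mul, diagonal_conjTranspose]
  have : star ((↑) ∘ Real.sqrt ∘ hA.1.eigenvalues : n → ℂ) = (↑) ∘ Real.sqrt ∘ hA.1.eigenvalues := by
    funext i; simp
  rw [this, mul_assoc]
  simp [Matrix.star_eq_conjTranspose, mul_assoc]

theorem Matrix.PosSemidef.sqrt_mul_self' {n : Type*} [Fintype n] [DecidableEq n]
    {A : Matrix n n ℂ} (hA : A.PosSemidef) : hA.sqrt * hA.sqrt = A := by
  unfold Matrix.PosSemidef.sqrt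
  have hU : (star hA.1.eigenvectorUnitary : Matrix n n ℂ) * hA.1.eigenvectorUnitary.1 = 1 :=
    Unitary.star_mul_self_of_mem hA.1.eigenvectorUnitary.2
  have hD : diagonal ((↑) ∘ Real.sqrt ∘ hA.1.eigenvalues : n → ℂ) *
      diagonal ((↑) ∘ Real.sqrt ∘ hA.1.eigenvalues) = diagonal (RCLike.ofReal ∘ hA.1.eigenvalues) := by
    rw [diagonal_mul_diagonal]
    congr 1; funext i
    simp only [Function.comp_apply]
    rw [← Complex.ofReal_mul, Real.mul_self_sqrt (hA.eigenvalues_nonneg i)]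
    rfl
  conv_rhs => rw [hA.1.spectral_theorem, Unitary.conjStarAlgAut_apply]
  calc _ = hA.1.eigenvectorUnitary.1 * diagonal ((↑) ∘ Real.sqrt ∘ hA.1.eigenvalues : n → ℂ) *
      ((star hA.1.eigenvectorUnitary : Matrix n n ℂ) * hA.1.eigenvectorUnitary.1) *
      diagonal ((↑) ∘ Real.sqrt ∘ hA.1.eigenvalues) * (star hA.1.eigenvectorUnitary : Matrix n n ℂ) := by
        simp only [mul_assoc]
    _ = _ := by rw [hU, mul_one, mul_assoc _ (diagonal _) (diagonal _), hD]

/-- **NDME block embedding of a linear ODE into a Lindblad equation.**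
With `H(t) = fromBlocks (A₂ t) 0 0 0` and `F(t) = fromBlocks (√2 · A₁(t)^{1/2}) 0 0 0`,
if `ρ` satisfies the Lindblad equation
`ρ' = -i[H,ρ] + F ρ Fᴴ - ½(ρ FᴴF + FᴴF ρ)` (entrywise derivatives), then the
upper-right `n×1` block `u(t) i = ρ t (inl i) (inr 0)` satisfies
`u' = -(A₁ + i A₂) u`. -/
theorem NDME_block_embedding {n : ℕ}
    (A₁ A₂ : ℝ → Matrix (Fin n) (Fin n) ℂ)
    (hA₁cont : Continuous A₁) (hA₂cont : Continuous A₂)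
    (hA₁ : ∀ t, (A₁ t).PosSemidef) (hA₂ : ∀ t, (A₂ t).IsHermitian)
    (H F : ℝ → Matrix (Fin n ⊕ Fin 1) (Fin n ⊕ Fin 1) ℂ)
    (hH : ∀ t, H t = fromBlocks (A₂ t) 0 0 0)
    (hF : ∀ t, F t = fromBlocks ((Real.sqrt 2 : ℝ) • (hA₁ t).sqrt) 0 0 0)
    (ρ : ℝ → Matrix (Fin n ⊕ Fin 1) (Fin n ⊕ Fin 1) ℂ)
    (hρ : ∀ t i j, HasDerivAt (fun s => ρ s i j)
      ((-(Complex.I • (H t * ρ t - ρ t * H t))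
        + F t * ρ t * (F t)ᴴ
        - (1 / 2 : ℂ) • (ρ t * (F t)ᴴ * F t + (F t)ᴴ * F t * ρ t)) i j) t) :
    ∀ t i, HasDerivAt (fun s => ρ s (Sum.inl i) (Sum.inr 0))
      ((-((A₁ t + Complex.I • A₂ t) *ᵥ (fun i' => ρ t (Sum.inl i') (Sum.inr 0)))) i) t := by
  intro t i
  have hρt : ρ t = fromBlocks (ρ t).toBlocks₁₁ (ρ t).toBlocks₁₂
      (ρ t).toBlocks₂₁ (ρ t).toBlocks₂₂ := (fromBlocks_toBlocks (ρ t)).symm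
  set S := (hA₁ t).sqrt with hSdef
  set u : Matrix (Fin n) (Fin 1) ℂ := (ρ t).toBlocks₁₂ with hu
  have hSH : Sᴴ = S := (hA₁ t).sqrt_conjTranspose_self'
  have hSS : S * S = A₁ t := (hA₁ t).sqrt_mul_self'
  have hc : Real.sqrt 2 * Real.sqrt 2 = 2 := Real.mul_self_sqrt (by norm_num)
  have hFH : (F t)ᴴ = F t := by
    rw [hF]
    simp [fromBlocks_conjTranspose, conjTranspose_smul, hSH, Matrix.PosSemidef.sqrt_conjTranspose_self']
  have hFF : (F t)ᴴ * F t = fromBlocks ((2:ℝ) • A₁ t) 0 0 0 := by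
    rw [hFH, hF, fromBlocks_multiply]
    simp [smul_mul_assoc, mul_smul_comm, smul_smul, hSS, hc, Matrix.PosSemidef.sqrt_mul_self']
  have e1 : (H t * ρ t - ρ t * H t) (Sum.inl i) (Sum.inr 0) = (A₂ t * u) i 0 := by
    rw [hH]
    conv_lhs => rw [hρt]
    simp [fromBlocks_multiply]
  have e2 : (F t * ρ t * (F t)ᴴ) (Sum.inl i) (Sum.inr 0) = 0 := by
    rw [hFH, hF]
    conv_lhs => rw [hρt]
    simp [fromBlocks_multiply]
  have e3 : (ρ t * (F t)ᴴ * F t) (Sum.inl i) (Sum.inr 0) = 0 := by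
    rw [mul_assoc, hFF]
    conv_lhs => rw [hρt]
    simp [fromBlocks_multiply]
  have e4 : ((F t)ᴴ * F t * ρ t) (Sum.inl i) (Sum.inr 0) = ((2:ℝ) • A₁ t * u) i 0 := by
    rw [hFF]
    conv_lhs => rw [hρt]
    simp [fromBlocks_multiply]
  have key : (-(Complex.I • (H t * ρ t - ρ t * H t))
        + F t * ρ t * (F t)ᴴ
        - (1 / 2 : ℂ) • (ρ t * (F t)ᴴ * F t + (F t)ᴴ * F t * ρ t)) (Sum.inl i) (Sum.inr 0)
      = (-((A₁ t + Complex.I • A₂ t) *ᵥ (fun i' => ρ t (Sum.inl i') (Sum.inr 0)))) i := by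
    simp only [Matrix.sub_apply, Matrix.add_apply, Matrix.neg_apply, Matrix.smul_apply,
      Pi.neg_apply, e1, e2, e3, e4]
    have hu0 : ∀ j, u j 0 = ρ t (Sum.inl j) (Sum.inr 0) := fun j => rfl
    simp only [mulVec, dotProduct, Matrix.mul_apply, Matrix.add_apply, Matrix.smul_apply,
      smul_mul_assoc]
    simp only [← hu0, smul_eq_mul, Complex.real_smul, Complex.ofReal_ofNat]
    simp only [zero_add, add_zero, Finset.mul_sum, ← Finset.sum_neg_distrib,
      ← Finset.sum_sub_distrib]
    exact Finset.sum_congr rfl (fun j _ => by ring)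
  exact key ▸ hρ t (Sum.inl i) (Sum.inr 0)
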